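/- Let $0 < a < b$, $f(t) = 1/t$, and $p \in (a,b)$. Then $\left| \frac{1}{p} - \frac{1}{\mathscr{L}} \right| \le \min\left\{ \frac{(p-a)^2 + (b-p)^2}{2(b-a)}\cdot\frac{1}{a^2},\ \frac{1}{2}\max\left\{ \frac{p-a}{a^2}, \frac{b-p}{p^2} \right\} \right\}$, where $\mathscr{L} = \frac{b-a}{\ln b - \ln a}$ is the logarithmic mean, so that $\frac{1}{b-a}\int_a^b \frac{dt}{t} = \frac{1}{\mathscr{L}}$. -/

import Mathlib

open intervalIntegral

lemma integ_one_div (x y : ℝ) (hx : 0 < x) (hxy : x ≤ y) :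
    ∫ t in x..y, 1/t = Real.log y - Real.log x := by
  rw [integral_one_div (by
    intro h
    rcases Set.mem_uIcc.1 h with ⟨h1,_⟩|⟨_,h2⟩ <;> linarith)]
  rw [Real.log_div (by linarith) (by linarith)]

lemma intble_one_div (x y : ℝ) (hx : 0 < x) (hxy : x ≤ y) :
    IntervalIntegrable (fun t => 1/t) MeasureTheory.volume x y := by
  apply ContinuousOn.intervalIntegrable
  apply ContinuousOn.div continuousOn_const continuousOn_id
  intro t ht h
  simp only [id_eq] at h
  rcases Set.mem_uIcc.1 ht with ⟨h1,_⟩|⟨_,h2⟩ <;> nlinarith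

lemma auxL (x y c : ℝ) (hx : 0 < x) (hxy : x ≤ y) (hc : 0 < c) (hcx : c ≤ x) :
    (Real.log y - Real.log x) - (y - x)/y ≤ (y-x)^2 / (2*c^2) := by
  have hy : 0 < y := lt_of_lt_of_le hx hxy
  have key : ∫ t in x..y, (1/t - 1/y) ≤ ∫ t in x..y, (y - t)/c^2 := by
    apply integral_mono_on hxy
    · exact (intble_one_div x y hx hxy).sub (_root_.intervalIntegrable_const)
    · apply ContinuousOn.intervalIntegrable; fun_prop
    · intro t ht
      obtain ⟨ht1, ht2⟩ := ht
      have ht0 : 0 < t := lt_of_lt_of_le hx ht1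
      have h1 : 1/t - 1/y = (y - t)/(t*y) := by field_simp
      rw [h1]
      apply div_le_div_of_nonneg_left (by linarith) (by positivity)
      nlinarith
  have e1 : ∫ t in x..y, (1/t - 1/y) = (Real.log y - Real.log x) - (y-x)/y := by
    rw [integral_sub (intble_one_div x y hx hxy) _root_.intervalIntegrable_const,
      integ_one_div x y hx hxy, integral_const, smul_eq_mul, mul_one_div]
  have e2 : ∫ t in x..y, (y - t)/c^2 = (y-x)^2 / (2*c^2) := by
    rw [integral_div]
    rw [integral_sub _root_.intervalIntegrable_const intervalIntegrable_id]
    rw [integral_id, integral_const, smul_eq_mul]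
    field_simp
    ring
  rw [e1, e2] at key
  exact key

lemma auxR (x y c : ℝ) (hx : 0 < x) (hxy : x ≤ y) (hc : 0 < c) (hcx : c ≤ x) :
    (y - x)/x - (Real.log y - Real.log x) ≤ (y-x)^2 / (2*c^2) := by
  have hy : 0 < y := lt_of_lt_of_le hx hxy
  have key : ∫ t in x..y, (1/x - 1/t) ≤ ∫ t in x..y, (t - x)/c^2 := by
    apply integral_mono_on hxy
    · exact (_root_.intervalIntegrable_const).sub (intble_one_div x y hx hxy)
    · apply ContinuousOn.intervalIntegrable; fun_prop
    · intro t ht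
      obtain ⟨ht1, ht2⟩ := ht
      have ht0 : 0 < t := lt_of_lt_of_le hx ht1
      have h1 : 1/x - 1/t = (t - x)/(x*t) := by field_simp
      rw [h1]
      apply div_le_div_of_nonneg_left (by linarith) (by positivity)
      nlinarith
  have e1 : ∫ t in x..y, (1/x - 1/t) = (y-x)/x - (Real.log y - Real.log x) := by
    rw [integral_sub _root_.intervalIntegrable_const (intble_one_div x y hx hxy),
      integ_one_div x y hx hxy, integral_const, smul_eq_mul, mul_one_div]
  have e2 : ∫ t in x..y, (t - x)/c^2 = (y-x)^2 / (2*c^2) := by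
    rw [integral_div]
    rw [integral_sub intervalIntegrable_id _root_.intervalIntegrable_const]
    rw [integral_id, integral_const, smul_eq_mul]
    field_simp
    ring
  rw [e1, e2] at key
  exact key

lemma auxLlb (x y : ℝ) (hx : 0 < x) (hxy : x ≤ y) :
    (y - x)/y ≤ Real.log y - Real.log x := by
  have hy : 0 < y := lt_of_lt_of_le hx hxy
  have := Real.log_le_sub_one_of_pos (show 0 < x/y by positivity)
  rw [Real.log_div (by linarith) (by linarith)] at this
  have h2 : x/y - 1 = -((y-x)/y) := by field_simp; ring
  linarith [h2 ▸ this]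

lemma auxRub (x y : ℝ) (hx : 0 < x) (hxy : x ≤ y) :
    Real.log y - Real.log x ≤ (y - x)/x := by
  have hy : 0 < y := lt_of_lt_of_le hx hxy
  have := Real.log_le_sub_one_of_pos (show 0 < y/x by positivity)
  rw [Real.log_div (by linarith) (by linarith)] at this
  have h2 : y/x - 1 = (y-x)/x := by field_simp
  linarith [h2 ▸ this]

theorem inv_ostrowski_refined (a b p : ℝ) (ha : 0 < a) (hab : a < b)
    (hp : p ∈ Set.Ioo a b) :
    |1 / p - 1 / ((b - a) / (Real.log b - Real.log a))| ≤
      min (((p - a) ^ 2 + (b - p) ^ 2) / (2 * (b - a)) * (1 / a ^ 2))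
        (1 / 2 * max ((p - a) / a ^ 2) ((b - p) / p ^ 2)) := by
  obtain ⟨hap, hpb⟩ := hp
  have hp0 : 0 < p := lt_trans ha hap
  have hb0 : 0 < b := lt_trans hp0 hpb
  have hba : 0 < b - a := by linarith
  set A := (Real.log p - Real.log a) - (p - a)/p with hAdef
  set B := (b - p)/p - (Real.log b - Real.log p) with hBdef
  have hA0 : 0 ≤ A := by
    have := auxLlb a p ha hap.le; simp only [hAdef]; linarith
  have hB0 : 0 ≤ B := by
    have := auxRub p b hp0 hpb.le; simp only [hBdef]; linarith
  have hA1 : A ≤ (p - a)^2 / (2*a^2) := auxL a p a ha hap.le ha le_rfl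
  have hB1 : B ≤ (b - p)^2 / (2*a^2) := auxR p b a hp0 hpb.le ha hap.le
  have hB2 : B ≤ (b - p)^2 / (2*p^2) := auxR p b p hp0 hpb.le hp0 le_rfl
  rw [one_div_div]
  have hd : 1 / p - (Real.log b - Real.log a) / (b - a) = (B - A) / (b - a) := by
    rw [hAdef, hBdef]
    field_simp
    ring
  rw [hd, abs_div, abs_of_pos hba]
  have habs : |B - A| ≤ A + B := abs_le.mpr ⟨by linarith, by linarith⟩
  have step : |B - A| / (b - a) ≤ (A + B) / (b - a) := by gcongr
  refine le_trans step (le_min ?_ ?_)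
  · have h1 : A + B ≤ ((p - a)^2 + (b - p)^2) / (2*a^2) := by
      rw [add_div]
      linarith [hA1, hB1]
    calc (A + B) / (b - a) ≤ (((p - a)^2 + (b - p)^2) / (2*a^2)) / (b - a) := by gcongr
      _ = ((p - a) ^ 2 + (b - p) ^ 2) / (2 * (b - a)) * (1 / a ^ 2) := by
          rw [div_div, mul_one_div, div_div]
          ring_nf
  · set M := max ((p - a) / a ^ 2) ((b - p) / p ^ 2) with hMdef
    have hM1 : (p - a) / a ^ 2 ≤ M := le_max_left _ _
    have hM2 : (b - p) / p ^ 2 ≤ M := le_max_right _ _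
    have hsum : A + B ≤ (b - a) / 2 * M := by
      have e1 : (p - a)^2 / (2*a^2) = (p - a)/2 * ((p - a)/a^2) := by ring
      have e2 : (b - p)^2 / (2*p^2) = (b - p)/2 * ((b - p)/p^2) := by ring
      have t1 : (p - a)/2 * ((p - a)/a^2) ≤ (p - a)/2 * M :=
        mul_le_mul_of_nonneg_left hM1 (by linarith)
      have t2 : (b - p)/2 * ((b - p)/p^2) ≤ (b - p)/2 * M :=
        mul_le_mul_of_nonneg_left hM2 (by linarith)
      nlinarith [hA1, hB2]
    rw [div_le_iff₀ hba]
    linarith [hsum]
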